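/- Let A be a (possibly noncommutative) unital ℂ-algebra, let T(u), T(v) ∈ M_N(A) and let R ∈ M_N(ℂ)⊗M_N(ℂ) be invertible. If R (T(u)⊗I)(I⊗T(v)) = (I⊗T(v))(T(u)⊗I) R in M_N(A)⊗M_N(A), then the traces commute: [tr T(u), tr T(v)] = 0 in A. -/
import Mathlib

open Matrix Kronecker

lemma tr_scalar_comm {A : Type*} [Ring A] [Algebra ℂ A] {n : Type*} [Fintype n]
    (S : Matrix n n ℂ) (M : Matrix n n A) :
    (S.map (algebraMap ℂ A) * M).trace = (M * S.map (algebraMap ℂ A)).trace := by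
  simp only [Matrix.trace, Matrix.diag, Matrix.mul_apply, Matrix.map_apply]
  rw [Finset.sum_comm]
  simp_rw [Algebra.commutes]

lemma tr_prod1 {A : Type*} [Ring A] (N : ℕ) (Tu Tv : Matrix (Fin N) (Fin N) A) :
    (Matrix.kroneckerMap (· * ·) Tu (1 : Matrix (Fin N) (Fin N) A) *
      Matrix.kroneckerMap (· * ·) (1 : Matrix (Fin N) (Fin N) A) Tv).trace =
    Tu.trace * Tv.trace := by
  simp only [Matrix.trace, Matrix.diag, Matrix.mul_apply, Matrix.kroneckerMap_apply,
    Fintype.sum_prod_type, Matrix.one_apply]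
  simp only [mul_ite, mul_zero, mul_one, ite_mul, zero_mul, one_mul,
    Finset.sum_ite_eq, Finset.sum_ite_eq', Finset.mem_univ, if_true]
  rw [Finset.sum_mul]
  simp [Finset.mul_sum]

lemma tr_prod2 {A : Type*} [Ring A] (N : ℕ) (Tu Tv : Matrix (Fin N) (Fin N) A) :
    (Matrix.kroneckerMap (· * ·) (1 : Matrix (Fin N) (Fin N) A) Tv *
      Matrix.kroneckerMap (· * ·) Tu (1 : Matrix (Fin N) (Fin N) A)).trace =
    Tv.trace * Tu.trace := by
  simp only [Matrix.trace, Matrix.diag, Matrix.mul_apply, Matrix.kroneckerMap_apply,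
    Fintype.sum_prod_type, Matrix.one_apply]
  simp only [mul_ite, mul_zero, mul_one, ite_mul, zero_mul, one_mul,
    Finset.sum_ite_eq, Finset.sum_ite_eq', Finset.mem_univ, if_true]
  rw [Finset.sum_comm, Finset.sum_mul]
  simp [Finset.mul_sum]

theorem rtt_trace_commute {A : Type*} [Ring A] [Algebra ℂ A] (N : ℕ)
    (Tu Tv : Matrix (Fin N) (Fin N) A)
    (R : Matrix (Fin N × Fin N) (Fin N × Fin N) ℂ) (hR : IsUnit R)
    (hRTT :
      R.map (algebraMap ℂ A) *
          (Matrix.kroneckerMap (· * ·) Tu (1 : Matrix (Fin N) (Fin N) A) *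
            Matrix.kroneckerMap (· * ·) (1 : Matrix (Fin N) (Fin N) A) Tv) =
        Matrix.kroneckerMap (· * ·) (1 : Matrix (Fin N) (Fin N) A) Tv *
            Matrix.kroneckerMap (· * ·) Tu (1 : Matrix (Fin N) (Fin N) A) *
          R.map (algebraMap ℂ A)) :
    Tu.trace * Tv.trace = Tv.trace * Tu.trace := by
  obtain ⟨u, hu⟩ := hR
  set L := Matrix.kroneckerMap (· * ·) Tu (1 : Matrix (Fin N) (Fin N) A) *
      Matrix.kroneckerMap (· * ·) (1 : Matrix (Fin N) (Fin N) A) Tv with hL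
  set Rt := Matrix.kroneckerMap (· * ·) (1 : Matrix (Fin N) (Fin N) A) Tv *
      Matrix.kroneckerMap (· * ·) Tu (1 : Matrix (Fin N) (Fin N) A) with hRt
  set S : Matrix (Fin N × Fin N) (Fin N × Fin N) ℂ := ((u⁻¹ : (Matrix (Fin N × Fin N) (Fin N × Fin N) ℂ)ˣ) : Matrix (Fin N × Fin N) (Fin N × Fin N) ℂ) with hS
  have hinv : S.map (algebraMap ℂ A) * R.map (algebraMap ℂ A) = 1 := by
    rw [hS, ← Matrix.map_mul, ← hu, Units.inv_mul,
      Matrix.map_one _ (map_zero _) (map_one _)]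
  have key : L = S.map (algebraMap ℂ A) * (Rt * R.map (algebraMap ℂ A)) := by
    rw [← hRTT, ← mul_assoc, hinv, one_mul]
  have htr := congrArg Matrix.trace key
  have hinv2 : R.map (algebraMap ℂ A) * S.map (algebraMap ℂ A) = 1 := by
    rw [hS, ← Matrix.map_mul, ← hu, Units.mul_inv,
      Matrix.map_one _ (map_zero _) (map_one _)]
  rw [tr_scalar_comm, mul_assoc, hinv2, mul_one] at htr
  rw [← tr_prod1 N Tu Tv, ← tr_prod2 N Tu Tv, htr]
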